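/- If every separable mixed manna instance whose pure bads are identically ordered (IDO) admits a PropMX allocation, then every separable mixed manna instance admits a PropMX allocation. Likewise, if every separable mixed manna instance with IDO pure bads admits a PropMX0 allocation, then every separable mixed manna instance admits a PropMX0 allocation. -/

import Mathlib

open scoped Classical
open Finset

noncomputable section FairDivision

variable {N I : Type*}

/-- Additive value of agent `i` for a bundle `S`. -/
def bval (v : N → I → ℝ) (i : N) (S : Finset I) : ℝ := ∑ j ∈ S, v i j

/-- `x` is an allocation of the item set `S`: the bundles are pairwise disjoint
and together cover exactly `S`. -/
def IsAllocation [Fintype N] (x : N → Finset I) (S : Finset I) : Prop :=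
  (∀ i h : N, i ≠ h → Disjoint (x i) (x h)) ∧ Finset.univ.biUnion x = S

/-- Envy-freeness up to any item (mixed manna version). -/
def EFX (v : N → I → ℝ) (x : N → Finset I) : Prop :=
  ∀ i h : N,
    (∀ g ∈ x h, 0 < v i g → bval v i (x i) ≥ bval v i ((x h).erase g)) ∨
    (∀ c ∈ x i, v i c < 0 → bval v i ((x i).erase c) ≥ bval v i (x h))

/-- The stronger notion EFX₀, where goods of zero value are also considered. -/
def EFX0 (v : N → I → ℝ) (x : N → Finset I) : Prop :=
  ∀ i h : N,
    (∀ g ∈ x h, 0 ≤ v i g → bval v i (x i) ≥ bval v i ((x h).erase g)) ∨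
    (∀ c ∈ x i, v i c < 0 → bval v i ((x i).erase c) ≥ bval v i (x h))

/-- `dpos v x i`: the maximin good value `d_i(x)`: the maximum, over agents `h ≠ i`
whose bundle contains an item valued positively by `i`, of the minimum value
(for `i`) of such an item in `x h`; `0` if no such agent exists. -/
def dpos [Fintype N] (v : N → I → ℝ) (x : N → Finset I) (i : N) : ℝ :=
  if hA : (Finset.univ.filter fun h =>
      h ≠ i ∧ ((x h).filter fun j => 0 < v i j).Nonempty).Nonempty then
    (Finset.univ.filter fun h =>
        h ≠ i ∧ ((x h).filter fun j => 0 < v i j).Nonempty).sup' hA fun h =>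
      if hB : ((x h).filter fun j => 0 < v i j).Nonempty then
        ((x h).filter fun j => 0 < v i j).inf' hB fun j => v i j
      else 0
  else 0

/-- `dnn v x i`: the variant `d⁰_i(x)` of the maximin good value where
nonnegatively-valued items are considered. -/
def dnn [Fintype N] (v : N → I → ℝ) (x : N → Finset I) (i : N) : ℝ :=
  if hA : (Finset.univ.filter fun h =>
      h ≠ i ∧ ((x h).filter fun j => 0 ≤ v i j).Nonempty).Nonempty then
    (Finset.univ.filter fun h =>
        h ≠ i ∧ ((x h).filter fun j => 0 ≤ v i j).Nonempty).sup' hA fun h =>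
      if hB : ((x h).filter fun j => 0 ≤ v i j).Nonempty then
        ((x h).filter fun j => 0 ≤ v i j).inf' hB fun j => v i j
      else 0
  else 0

/-- Proportional share of agent `i`. -/
def propShare [Fintype N] (v : N → I → ℝ) (M : Finset I) (i : N) : ℝ :=
  bval v i M / (Fintype.card N : ℝ)

/-- Proportionality up to the maximin good or any bad. -/
def PropMX [Fintype N] (v : N → I → ℝ) (M : Finset I) (x : N → Finset I) : Prop :=
  ∀ i : N,
    bval v i (x i) + dpos v x i ≥ propShare v M i ∨
    (∀ c ∈ x i, v i c < 0 → bval v i ((x i).erase c) ≥ propShare v M i)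

/-- The stronger notion PropMX₀. -/
def PropMX0 [Fintype N] (v : N → I → ℝ) (M : Finset I) (x : N → Finset I) : Prop :=
  ∀ i : N,
    bval v i (x i) + dnn v x i ≥ propShare v M i ∨
    (∀ c ∈ x i, v i c < 0 → bval v i ((x i).erase c) ≥ propShare v M i)

/-- Utilitarian social welfare. -/
def SW [Fintype N] (v : N → I → ℝ) (x : N → Finset I) : ℝ :=
  ∑ i : N, bval v i (x i)

/-- `y` Pareto-dominates `x`. -/
def ParetoDominates [Fintype N] (v : N → I → ℝ) (y x : N → Finset I) : Prop :=
  (∀ i : N, bval v i (y i) ≥ bval v i (x i)) ∧ ∃ h : N, bval v h (y h) > bval v h (x h)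

/-- `x` is Pareto-optimal among allocations of `M`. -/
def ParetoOptimal [Fintype N] (v : N → I → ℝ) (M : Finset I) (x : N → Finset I) : Prop :=
  ¬ ∃ y : N → Finset I, IsAllocation y M ∧ ParetoDominates v y x

/-- `x` maximizes the social welfare over all allocations of `M`. -/
def MaxSW [Fintype N] (v : N → I → ℝ) (M : Finset I) (x : N → Finset I) : Prop :=
  ∀ y : N → Finset I, IsAllocation y M → SW v y ≤ SW v x

/-- A set `B` of (pure bad) items is identically ordered (IDO): it can be enumerated
as `c₁, …, c_k` with `v i c₁ ≤ v i c₂ ≤ … ≤ v i c_k` for every agent `i`. -/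
def IDO (v : N → I → ℝ) (B : Finset I) : Prop :=
  ∃ l : List I, l.Nodup ∧ l.toFinset = B ∧ ∀ i : N, (l.map (v i)).Pairwise (· ≤ ·)

end FairDivision

noncomputable section IDOReduction

open Finset

variable {N I : Type*}

/-- Sorted comparison within a list. -/
private lemma sorted_getElem_le {l : List ℝ} (h : l.Pairwise (· ≤ ·)) {i j : ℕ}
    (hij : i ≤ j) (hj : j < l.length) : l[i]'(lt_of_le_of_lt hij hj) ≤ l[j] := by
  rcases eq_or_lt_of_le hij with rfl | hlt
  · exact le_refl _
  · exact List.pairwise_iff_getElem.mp h i j (by omega) hj hlt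

private lemma getD_nodup_inj {l : List I} (hn : l.Nodup) {t t' : ℕ} (d : I)
    (ht : t < l.length) (ht' : t' < l.length) (h : l.getD t d = l.getD t' d) : t = t' := by
  rw [List.getD_eq_getElem l d ht, List.getD_eq_getElem l d ht'] at h
  exact (List.Nodup.getElem_inj_iff hn).mp h

/-- The sequential picking process: for each slot `c` in the list, the owner of `c`
(implicit in `w c := v (owner c)`) picks a remaining item maximizing `w c`. -/
private def pickL (w : I → I → ℝ) : List I → Finset I → List I
  | [], _ => []
  | c :: cs, R =>
    if h : R.Nonempty then
      (R.exists_max_image (w c) h).choose ::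
        pickL w cs (R.erase (R.exists_max_image (w c) h).choose)
    else []

private lemma pickL_length (w : I → I → ℝ) :
    ∀ (l : List I) (R : Finset I), l.length ≤ R.card → (pickL w l R).length = l.length
  | [], _, _ => rfl
  | c :: cs, R, h => by
    have hR : R.Nonempty := card_pos.mp (lt_of_lt_of_le (Nat.succ_pos _) h)
    rw [pickL, dif_pos hR]
    have hmem := (R.exists_max_image (w c) hR).choose_spec.1
    have hcard : cs.length ≤ (R.erase (R.exists_max_image (w c) hR).choose).card := by
      rw [card_erase_of_mem hmem]
      simp only [List.length_cons] at h; omega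
    simp [pickL_length w cs _ hcard]

private lemma pickL_mem (w : I → I → ℝ) :
    ∀ (l : List I) (R : Finset I), ∀ b ∈ pickL w l R, b ∈ R
  | [], _, b, hb => by simp [pickL] at hb
  | c :: cs, R, b, hb => by
    rw [pickL] at hb
    by_cases hR : R.Nonempty
    · rw [dif_pos hR] at hb
      rcases List.mem_cons.mp hb with rfl | hb
      · exact (R.exists_max_image (w c) hR).choose_spec.1
      · exact erase_subset _ _ (pickL_mem w cs _ b hb)
    · rw [dif_neg hR] at hb; simp at hb

private lemma pickL_nodup (w : I → I → ℝ) :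
    ∀ (l : List I) (R : Finset I), (pickL w l R).Nodup
  | [], _ => List.nodup_nil
  | c :: cs, R => by
    rw [pickL]
    by_cases hR : R.Nonempty
    · rw [dif_pos hR]
      refine List.nodup_cons.mpr ⟨fun hmem => ?_, pickL_nodup w cs _⟩
      have := pickL_mem w cs _ _ hmem
      exact (notMem_erase _ _) this
    · rw [dif_neg hR]; exact List.nodup_nil

/-- Key bound: at step `t`, at most `t` elements of the original pool are strictly
better (for the step-`t` picker) than the item picked at step `t`. -/
private lemma pickL_bound (w : I → I → ℝ) (d : I) :
    ∀ (l : List I) (R : Finset I), l.length ≤ R.card → ∀ t, t < l.length →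
      (R.filter fun b =>
        w (l.getD t d) ((pickL w l R).getD t d) < w (l.getD t d) b).card ≤ t
  | [], _, _, t, ht => by simp at ht
  | c :: cs, R, h, t, ht => by
    have hR : R.Nonempty := card_pos.mp (lt_of_lt_of_le (Nat.succ_pos _) h)
    set b := (R.exists_max_image (w c) hR).choose with hbdef
    have hspec := (R.exists_max_image (w c) hR).choose_spec
    have hpick : pickL w (c :: cs) R = b :: pickL w cs (R.erase b) := by
      rw [pickL, dif_pos hR]
    cases t with
    | zero =>
      simp only [hpick, List.getD_cons_zero]
      have : (R.filter fun x => w c b < w c x) = ∅ := by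
        refine filter_eq_empty_iff.mpr fun x hx => not_lt.mpr (hspec.2 x hx)
      simp [this]
    | succ t =>
      simp only [hpick, List.getD_cons_succ]
      have hcard : cs.length ≤ (R.erase b).card := by
        rw [card_erase_of_mem hspec.1]
        simp only [List.length_cons] at h; omega
      have ih := pickL_bound w d cs (R.erase b) hcard t (by
        simp only [List.length_cons] at ht; omega)
      have hsub : (R.filter fun x =>
          w (cs.getD t d) ((pickL w cs (R.erase b)).getD t d) < w (cs.getD t d) x) ⊆
          insert b ((R.erase b).filter fun x =>
            w (cs.getD t d) ((pickL w cs (R.erase b)).getD t d) < w (cs.getD t d) x) := by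
        intro x hx
        rcases mem_filter.mp hx with ⟨hxR, hxlt⟩
        by_cases hxb : x = b
        · exact mem_insert.mpr (Or.inl hxb)
        · exact mem_insert.mpr (Or.inr (mem_filter.mpr ⟨mem_erase.mpr ⟨hxb, hxR⟩, hxlt⟩))
      calc _ ≤ (insert b ((R.erase b).filter fun x =>
            w (cs.getD t d) ((pickL w cs (R.erase b)).getD t d) < w (cs.getD t d) x)).card :=
              card_le_card hsub
        _ ≤ _ + 1 := card_insert_le _ _
        _ ≤ t + 1 := by omega

/-- Generic form of the maximin-item correction term. -/
private def Dg [Fintype N] (F : N → Finset I) (u : I → ℝ) (i : N) : ℝ :=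
  if hA : (Finset.univ.filter fun h => h ≠ i ∧ (F h).Nonempty).Nonempty then
    (Finset.univ.filter fun h => h ≠ i ∧ (F h).Nonempty).sup' hA fun h =>
      if hB : (F h).Nonempty then (F h).inf' hB u else 0
  else 0

private lemma Dg_congr [Fintype N] {F F' : N → Finset I} {u u' : I → ℝ}
    (hF : ∀ h, F h = F' h) (hu : ∀ h, ∀ j ∈ F h, u j = u' j) (i : N) :
    Dg F u i = Dg F' u' i := by
  have hFF : F = F' := funext hF
  subst hFF
  unfold Dg
  split_ifs with hA
  · refine Finset.sup'_congr hA rfl fun h _ => ?_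
    split_ifs with hB
    · exact Finset.inf'_congr hB rfl (fun j hj => hu h j hj)
    · rfl
  · rfl

private lemma dpos_eq_Dg [Fintype N] (v : N → I → ℝ) (x : N → Finset I) (i : N) :
    dpos v x i = Dg (fun h => (x h).filter fun j => 0 < v i j) (v i) i := rfl

private lemma dnn_eq_Dg [Fintype N] (v : N → I → ℝ) (x : N → Finset I) (i : N) :
    dnn v x i = Dg (fun h => (x h).filter fun j => 0 ≤ v i j) (v i) i := rfl

/-- Generic form of PropMX / PropMX₀, parameterized by the predicate selecting goods. -/
private def PropGen (P : ℝ → Prop) [Fintype N] (v : N → I → ℝ) (M : Finset I)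
    (x : N → Finset I) : Prop :=
  ∀ i : N,
    bval v i (x i) + Dg (fun h => (x h).filter fun j => P (v i j)) (v i) i ≥ propShare v M i ∨
    (∀ c ∈ x i, v i c < 0 → bval v i ((x i).erase c) ≥ propShare v M i)

private lemma propMX_iff_propGen [Fintype N] (v : N → I → ℝ) (M : Finset I)
    (x : N → Finset I) : PropMX v M x ↔ PropGen (fun r => 0 < r) v M x := by
  unfold PropMX PropGen
  refine forall_congr' fun i => or_congr_left ?_
  rw [dpos_eq_Dg, Dg_congr (fun h => Finset.filter_congr fun _ _ => Iff.rfl)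
    (fun _ _ _ => rfl) i]

private lemma propMX0_iff_propGen [Fintype N] (v : N → I → ℝ) (M : Finset I)
    (x : N → Finset I) : PropMX0 v M x ↔ PropGen (fun r => 0 ≤ r) v M x := by
  unfold PropMX0 PropGen
  refine forall_congr' fun i => or_congr_left ?_
  rw [dnn_eq_Dg, Dg_congr (fun h => Finset.filter_congr fun _ _ => Iff.rfl)
    (fun _ _ _ => rfl) i]

end IDOReduction

noncomputable section KeyReduction

open Finset

private lemma key_reduction (P : ℝ → Prop) (hP : ∀ r : ℝ, r < 0 → ¬ P r)
    (H : ∀ (N I : Type) [Fintype N] [Fintype I] [Nonempty N]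
        (v : N → I → ℝ) (M : Finset I),
        (∀ j ∈ M, (∀ i : N, 0 ≤ v i j) ∨ (∀ i : N, v i j < 0)) →
        IDO v (M.filter fun j => ∀ i : N, v i j < 0) →
        ∃ x : N → Finset I, IsAllocation x M ∧ PropGen P v M x) :
    ∀ (N I : Type) [Fintype N] [Fintype I] [Nonempty N]
        (v : N → I → ℝ) (M : Finset I),
        (∀ j ∈ M, (∀ i : N, 0 ≤ v i j) ∨ (∀ i : N, v i j < 0)) →
        ∃ x : N → Finset I, IsAllocation x M ∧ PropGen P v M x := by
  intro N I instN instI instNE v M hsep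
  classical
  set B := M.filter fun j => ∀ i : N, v i j < 0 with hBdef
  have hBM : B ⊆ M := filter_subset _ _
  have hBneg : ∀ j ∈ B, ∀ i, v i j < 0 := fun j hj i => (mem_filter.mp hj).2 i
  have hgood : ∀ j ∈ M, j ∉ B → ∀ i, 0 ≤ v i j := by
    intro j hj hjB i
    rcases hsep j hj with h | h
    · exact h i
    · exact absurd (mem_filter.mpr ⟨hj, h⟩) hjB
  by_cases hBne : B.Nonempty
  swap
  · refine H N I v M hsep ?_
    rw [← hBdef, not_nonempty_iff_eq_empty.mp hBne]
    exact ⟨[], List.nodup_nil, by simp, fun i => List.Pairwise.nil⟩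
  obtain ⟨j₀, hj₀⟩ := hBne
  set k := B.card with hk
  have hk1 : 1 ≤ k := card_pos.mpr ⟨j₀, hj₀⟩
  set l₀ := B.toList with hl₀
  have hl₀nd : l₀.Nodup := Finset.nodup_toList B
  have hl₀len : l₀.length = k := Finset.length_toList B
  have hl₀mem : ∀ j, j ∈ l₀ ↔ j ∈ B := fun j => Finset.mem_toList
  set s : N → List ℝ := fun i => (B.val.map (v i)).sort (· ≤ ·) with hs
  have hslen : ∀ i, (s i).length = k := fun i => by
    rw [hs]; simp [Multiset.length_sort, hk]
  have hssorted : ∀ i, (s i).Pairwise (· ≤ ·) := fun i => Multiset.pairwise_sort _ _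
  have hscoe : ∀ i, ((s i : List ℝ) : Multiset ℝ) = B.val.map (v i) := fun i =>
    Multiset.sort_eq _ _
  set v' : N → I → ℝ :=
    fun i j => if j ∈ B then (s i).getD (l₀.idxOf j) 0 else v i j with hv'
  have hv'B : ∀ i j, j ∈ B → v' i j = (s i).getD (l₀.idxOf j) 0 := by
    intro i j hj; rw [hv']; exact if_pos hj
  have hv'nB : ∀ i j, j ∉ B → v' i j = v i j := by
    intro i j hj; rw [hv']; exact if_neg hj
  have hv'neg : ∀ i, ∀ j ∈ B, v' i j < 0 := by
    intro i j hj
    rw [hv'B i j hj]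
    have hidx : l₀.idxOf j < (s i).length := by
      rw [hslen, ← hl₀len]
      exact List.idxOf_lt_length_iff.mpr ((hl₀mem j).mpr hj)
    rw [List.getD_eq_getElem _ _ hidx]
    have hmem : (s i)[l₀.idxOf j] ∈ (s i) := List.getElem_mem _
    have hmem2 : (s i)[l₀.idxOf j] ∈ ((s i : List ℝ) : Multiset ℝ) := hmem
    rw [hscoe i] at hmem2
    obtain ⟨c, hc, hceq⟩ := Multiset.mem_map.mp hmem2
    rw [← hceq]
    exact hBneg c hc i
  have hv'map : ∀ i, l₀.map (v' i) = s i := by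
    intro i
    apply List.ext_getElem
    · rw [List.length_map, hl₀len, hslen]
    · intro t h1 h2
      have ht : t < l₀.length := by rw [List.length_map] at h1; exact h1
      rw [List.getElem_map]
      have htB : l₀[t] ∈ B := (hl₀mem _).mp (List.getElem_mem ht)
      rw [hv'B i _ htB, List.Nodup.idxOf_getElem hl₀nd,
        List.getD_eq_getElem _ _ (by rw [hslen, ← hl₀len]; simpa using h1)]
  have hsumlist : ∀ (f : I → ℝ), ∑ j ∈ B, f j = (l₀.map f).sum := by
    intro f
    rw [Finset.sum, ← Multiset.sum_coe, ← Multiset.map_coe, hl₀, Finset.coe_toList]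
  have hsumB : ∀ i, ∑ j ∈ B, v' i j = ∑ j ∈ B, v i j := by
    intro i
    rw [hsumlist (v' i), hsumlist (v i), hv'map i]
    have : ((s i : List ℝ) : Multiset ℝ).sum = ((l₀.map (v i) : List ℝ) : Multiset ℝ).sum := by
      rw [hscoe i, hl₀, ← Multiset.map_coe, Finset.coe_toList]
    simpa using this
  have hsumM : ∀ i, ∑ j ∈ M, v' i j = ∑ j ∈ M, v i j := by
    intro i
    rw [← Finset.sum_sdiff hBM (f := v' i), ← Finset.sum_sdiff hBM (f := v i), hsumB i]
    congr 1
    exact Finset.sum_congr rfl fun j hj => hv'nB i j (mem_sdiff.mp hj).2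
  have hpropeq : ∀ i, propShare v' M i = propShare v M i := by
    intro i
    unfold propShare bval
    rw [hsumM i]
  have hsep' : ∀ j ∈ M, (∀ i : N, 0 ≤ v' i j) ∨ (∀ i : N, v' i j < 0) := by
    intro j hj
    by_cases hjB : j ∈ B
    · exact Or.inr fun i => hv'neg i j hjB
    · exact Or.inl fun i => (hv'nB i j hjB) ▸ hgood j hj hjB i
  have hbadeq : (M.filter fun j => ∀ i : N, v' i j < 0) = B := by
    ext j
    rw [mem_filter]
    constructor
    · rintro ⟨hjM, hneg⟩
      by_contra hjB
      have h0 := hgood j hjM hjB (Classical.arbitrary N)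
      have hlt := hneg (Classical.arbitrary N)
      rw [hv'nB _ j hjB] at hlt
      linarith
    · intro hjB
      exact ⟨hBM hjB, fun i => hv'neg i j hjB⟩
  have hIDO' : IDO v' (M.filter fun j => ∀ i : N, v' i j < 0) := by
    rw [hbadeq]
    exact ⟨l₀, hl₀nd, Finset.toList_toFinset B, fun i => (hv'map i) ▸ hssorted i⟩
  obtain ⟨x', hx'alloc, hx'p⟩ := H N I v' M hsep' hIDO'
  have hx'sub : ∀ i, x' i ⊆ M := by
    intro i j hj
    rw [← hx'alloc.2]
    exact mem_biUnion.mpr ⟨i, mem_univ _, hj⟩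
  set o : I → N := fun c => if h : ∃ i, c ∈ x' i then h.choose else Classical.arbitrary N
    with ho
  have ho1 : ∀ c, (∃ i, c ∈ x' i) → c ∈ x' (o c) := by
    intro c hex
    rw [ho]; simp only
    rw [dif_pos hex]
    exact hex.choose_spec
  have ho2 : ∀ i c, c ∈ x' i → o c = i := by
    intro i c hc
    by_contra hne
    exact (Finset.disjoint_left.mp (hx'alloc.1 _ _ hne) (ho1 c ⟨i, hc⟩)) hc
  have hMx' : ∀ c ∈ M, c ∈ x' (o c) := by
    intro c hc
    rw [← hx'alloc.2] at hc
    obtain ⟨i, _, hci⟩ := mem_biUnion.mp hc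
    exact ho1 c ⟨i, hci⟩
  -- reversed slot list and picking process
  have hlrlen : l₀.reverse.length = k := by rw [List.length_reverse, hl₀len]
  have hlrnd : l₀.reverse.Nodup := List.nodup_reverse.mpr hl₀nd
  set lrF : ℕ → I := fun t => l₀.reverse.getD t j₀ with hlrF
  have hlrF_getElem : ∀ t (ht : t < k), lrF t = l₀[k - 1 - t]'(by omega) := by
    intro t ht
    have htl : t < l₀.reverse.length := by omega
    show l₀.reverse.getD t j₀ = _
    rw [List.getD_eq_getElem _ _ htl, List.getElem_reverse]
    have hidxeq : l₀.length - 1 - t = k - 1 - t := by omega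
    simp only [hidxeq]
  have hlrF_mem : ∀ t, t < k → lrF t ∈ B := by
    intro t ht
    rw [hlrF_getElem t ht]
    exact (hl₀mem _).mp (List.getElem_mem _)
  have hlrF_inj : ∀ t, t < k → ∀ t', t' < k → lrF t = lrF t' → t = t' := by
    intro t ht t' ht' heq
    exact getD_nodup_inj hlrnd j₀ (by omega) (by omega) heq
  have hlrF_idx : ∀ t, t < k → l₀.idxOf (lrF t) = k - 1 - t := by
    intro t ht
    rw [hlrF_getElem t ht, List.Nodup.idxOf_getElem hl₀nd]
  have hv'lrF : ∀ i t, t < k → v' i (lrF t) = (s i).getD (k - 1 - t) 0 := by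
    intro i t ht
    rw [hv'B i _ (hlrF_mem t ht), hlrF_idx t ht]
  set w : I → I → ℝ := fun c => v (o c) with hw
  set p : List I := pickL w l₀.reverse B with hp
  have hplen : p.length = k := by
    rw [hp, pickL_length w l₀.reverse B (by omega)]; omega
  have hpnd : p.Nodup := pickL_nodup w l₀.reverse B
  set pF : ℕ → I := fun t => p.getD t j₀ with hpF
  have hpF_mem : ∀ t, t < k → pF t ∈ B := by
    intro t ht
    rw [hpF]; simp only
    rw [List.getD_eq_getElem _ _ (by omega)]
    exact pickL_mem w l₀.reverse B _ (hp ▸ List.getElem_mem (by omega))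
  have hpF_inj : ∀ t, t < k → ∀ t', t' < k → pF t = pF t' → t = t' := by
    intro t ht t' ht' heq
    exact getD_nodup_inj hpnd j₀ (by omega) (by omega) heq
  have hpF_surj : ∀ b ∈ B, ∃ t, t < k ∧ pF t = b := by
    intro b hb
    have hsub : p.toFinset ⊆ B := fun a ha => pickL_mem w l₀.reverse B a (List.mem_toFinset.mp ha)
    have hcard : B.card ≤ p.toFinset.card := by
      rw [List.toFinset_card_of_nodup hpnd, hplen]
    have : p.toFinset = B := Finset.eq_of_subset_of_card_le hsub hcard
    rw [← this] at hb
    obtain ⟨n, hn, hnb⟩ := List.mem_iff_getElem.mp (List.mem_toFinset.mp hb)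
    exact ⟨n, by omega, by rw [hpF]; simp only; rw [List.getD_eq_getElem _ _ hn]; exact hnb⟩
  -- slot index sets
  set T : N → Finset ℕ := fun i => (Finset.range k).filter fun t => o (lrF t) = i with hT
  have hTk : ∀ i t, t ∈ T i → t < k := by
    intro i t ht
    exact mem_range.mp (mem_filter.mp ht).1
  have hTo : ∀ i t, t ∈ T i → o (lrF t) = i := fun i t ht => (mem_filter.mp ht).2
  have hTmem : ∀ t, t < k → t ∈ T (o (lrF t)) := by
    intro t ht
    exact mem_filter.mpr ⟨mem_range.mpr ht, rfl⟩
  -- key pointwise inequality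
  have hkey : ∀ i t, t ∈ T i → v' i (lrF t) ≤ v i (pF t) := by
    intro i t ht
    have htk : t < k := hTk i t ht
    have hoi : o (lrF t) = i := hTo i t ht
    have hb0 := pickL_bound w j₀ l₀.reverse B (by omega) t (by omega)
    have hwt : w (l₀.reverse.getD t j₀) = v i := by
      show v (o (l₀.reverse.getD t j₀)) = v i
      rw [show l₀.reverse.getD t j₀ = lrF t from rfl, hoi]
    rw [hwt] at hb0

    have hbp : (pickL w l₀.reverse B).getD t j₀ = pF t := rfl
    rw [hbp] at hb0
    set m := v i (pF t) with hm
    rw [hv'lrF i t htk]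
    have hlt : k - 1 - t < (s i).length := by rw [hslen]; omega
    rw [List.getD_eq_getElem _ _ hlt]
    by_contra hcon
    push_neg at hcon
    -- hcon : m < (s i)[k-1-t]
    have hdropall : ∀ a ∈ (s i).drop (k - 1 - t), m < a := by
      intro a ha
      obtain ⟨u, hu, hua⟩ := List.mem_iff_getElem.mp ha
      rw [List.getElem_drop] at hua
      have hle : (s i)[k - 1 - t] ≤ (s i)[k - 1 - t + u]'(by
          have := hu; rw [List.length_drop] at this; omega) :=
        sorted_getElem_le (hssorted i) (by omega) (by
          have := hu; rw [List.length_drop] at this; rw [hslen] at *; omega)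
      rw [← hua]
      exact lt_of_lt_of_le hcon hle
    have hcount1 : t + 1 ≤ (s i).countP (fun a => decide (m < a)) := by
      have hsplit : (s i).countP (fun a => decide (m < a)) =
          ((s i).take (k - 1 - t)).countP (fun a => decide (m < a)) +
          ((s i).drop (k - 1 - t)).countP (fun a => decide (m < a)) := by
        conv_lhs => rw [← List.take_append_drop (k - 1 - t) (s i)]
        rw [List.countP_append]
      have hdrop : ((s i).drop (k - 1 - t)).countP (fun a => decide (m < a)) =
          ((s i).drop (k - 1 - t)).length :=
        List.countP_eq_length.mpr fun a ha => decide_eq_true (hdropall a ha)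
      have hdl : ((s i).drop (k - 1 - t)).length = t + 1 := by
        rw [List.length_drop, hslen]; omega
      omega
    have hcount2 : (s i).countP (fun a => decide (m < a)) =
        (B.filter fun b => m < v i b).card := by
      have h1 : Multiset.countP (fun a => m < a) ((s i : List ℝ) : Multiset ℝ) =
          (s i).countP (fun a => decide (m < a)) := Multiset.coe_countP _ _
      rw [← h1, hscoe i, Multiset.countP_map]
      rfl
    rw [hcount2] at hcount1
    omega
  -- slot decomposition of x'
  have hslots : ∀ i, (x' i).filter (fun j => j ∈ B) = (T i).image lrF := by
    intro i
    ext c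
    constructor
    · intro hc
      obtain ⟨hcx, hcB⟩ := mem_filter.mp hc
      have hcl : c ∈ l₀.reverse := by rw [List.mem_reverse]; exact (hl₀mem c).mpr hcB
      obtain ⟨t, htl, htc⟩ := List.mem_iff_getElem.mp hcl
      have htF : lrF t = c := by
        show l₀.reverse.getD t j₀ = c
        rw [List.getD_eq_getElem _ _ htl]; exact htc
      refine mem_image.mpr ⟨t, ?_, htF⟩
      refine mem_filter.mpr ⟨mem_range.mpr (by omega), ?_⟩
      rw [htF]
      exact ho2 i c hcx
    · intro hc
      obtain ⟨t, htT, htc⟩ := mem_image.mp hc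
      have htk : t < k := hTk i t htT
      have hcB : c ∈ B := htc ▸ hlrF_mem t htk
      refine mem_filter.mpr ⟨?_, hcB⟩
      have := hMx' c (hBM hcB)
      rwa [show o c = i from by rw [← htc]; exact hTo i t htT] at this
  -- the final allocation
  set x : N → Finset I := fun i => ((x' i).filter (fun j => j ∉ B)) ∪ (T i).image pF
    with hx
  have himB : ∀ i, ∀ b ∈ (T i).image pF, b ∈ B := by
    intro i b hb
    obtain ⟨t, htT, htb⟩ := mem_image.mp hb
    exact htb ▸ hpF_mem t (hTk i t htT)
  have hdisjfi : ∀ i, Disjoint ((x' i).filter (fun j => j ∉ B)) ((T i).image pF) := by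
    intro i
    rw [Finset.disjoint_left]
    intro a ha hai
    exact (mem_filter.mp ha).2 (himB i a hai)
  have halloc : IsAllocation x M := by
    constructor
    · intro i h hne
      rw [Finset.disjoint_left]
      intro a hai hah
      rw [hx] at hai hah
      rcases mem_union.mp hai with h1 | h1 <;> rcases mem_union.mp hah with h2 | h2
      · exact Finset.disjoint_left.mp (hx'alloc.1 i h hne)
          (mem_of_mem_filter a h1) (mem_of_mem_filter a h2)
      · exact (mem_filter.mp h1).2 (himB h a h2)
      · exact (mem_filter.mp h2).2 (himB i a h1)
      · obtain ⟨t, htT, hta⟩ := mem_image.mp h1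
        obtain ⟨t', htT', hta'⟩ := mem_image.mp h2
        have : t = t' := hpF_inj t (hTk i t htT) t' (hTk h t' htT') (by rw [hta, hta'])
        subst this
        exact hne (by rw [← hTo i t htT, hTo h t htT'])
    · ext j
      simp only [mem_biUnion, mem_univ, true_and]
      constructor
      · rintro ⟨i, hji⟩
        rw [hx] at hji
        rcases mem_union.mp hji with h1 | h1
        · exact hx'sub i (mem_of_mem_filter j h1)
        · exact hBM (himB i j h1)
      · intro hjM
        by_cases hjB : j ∈ B
        · obtain ⟨t, htk, htj⟩ := hpF_surj j hjB
          refine ⟨o (lrF t), ?_⟩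
          rw [hx]
          exact mem_union_right _ (mem_image.mpr ⟨t, hTmem t htk, htj⟩)
        · refine ⟨o j, ?_⟩
          rw [hx]
          exact mem_union_left _ (mem_filter.mpr ⟨hMx' j hjM, hjB⟩)
  -- sum decompositions
  have hxval : ∀ i, bval v i (x i) =
      (∑ j ∈ (x' i).filter (fun j => j ∉ B), v i j) + ∑ t ∈ T i, v i (pF t) := by
    intro i
    show ∑ j ∈ ((x' i).filter (fun j => j ∉ B)) ∪ (T i).image pF, v i j = _
    rw [Finset.sum_union (hdisjfi i), Finset.sum_image (fun a ha b hb hab =>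
      hpF_inj a (hTk i a ha) b (hTk i b hb) hab)]
  have hx'val : ∀ i, bval v' i (x' i) =
      (∑ j ∈ (x' i).filter (fun j => j ∉ B), v' i j) + ∑ t ∈ T i, v' i (lrF t) := by
    intro i
    have hsplit : (x' i).filter (fun j => j ∈ B) ∪ (x' i).filter (fun j => j ∉ B) = x' i := by
      ext a
      simp only [mem_union, mem_filter]
      by_cases haB : a ∈ B <;> tauto
    have hdisj : Disjoint ((x' i).filter (fun j => j ∈ B)) ((x' i).filter (fun j => j ∉ B)) := by
      rw [Finset.disjoint_left]
      intro a ha ha'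
      exact (mem_filter.mp ha').2 (mem_filter.mp ha).2
    show ∑ j ∈ x' i, v' i j = _
    conv_lhs => rw [← hsplit]
    rw [Finset.sum_union hdisj, hslots i, Finset.sum_image (fun a ha b hb hab =>
      hlrF_inj a (hTk i a ha) b (hTk i b hb) hab), add_comm]
  have hCeq : ∀ i h, ∑ j ∈ (x' h).filter (fun j => j ∉ B), v i j =
      ∑ j ∈ (x' h).filter (fun j => j ∉ B), v' i j :=
    fun i h => Finset.sum_congr rfl fun j hj => (hv'nB i j (mem_filter.mp hj).2).symm
  have hmain : ∀ i, bval v' i (x' i) ≤ bval v i (x i) := by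
    intro i
    rw [hxval i, hx'val i, hCeq i i]
    exact add_le_add le_rfl (Finset.sum_le_sum fun t ht => hkey i t ht)
  refine ⟨x, halloc, ?_⟩
  intro i
  rcases hx'p i with h1 | h2
  · left
    have hDg : Dg (fun h => (x h).filter fun j => P (v i j)) (v i) i =
        Dg (fun h => (x' h).filter fun j => P (v' i j)) (v' i) i := by
      have hFeq : ∀ h, (x h).filter (fun j => P (v i j)) =
          (x' h).filter (fun j => P (v' i j)) := by
        intro h
        ext j
        rw [mem_filter, mem_filter]
        constructor
        · rintro ⟨hjx, hjP⟩
          have hjnB : j ∉ B := fun hjB => hP _ (hBneg j hjB i) hjP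
          rw [hx] at hjx
          rcases mem_union.mp hjx with hj1 | hj1
          · exact ⟨mem_of_mem_filter j hj1, by rw [hv'nB i j hjnB]; exact hjP⟩
          · exact absurd (himB h j hj1) hjnB
        · rintro ⟨hjx', hjP'⟩
          have hjnB : j ∉ B := fun hjB => hP _ (hv'neg i j hjB) hjP'
          refine ⟨?_, by rw [← hv'nB i j hjnB]; exact hjP'⟩
          rw [hx]
          exact mem_union_left _ (mem_filter.mpr ⟨hjx', hjnB⟩)
      refine Dg_congr hFeq (fun h j hj => ?_) i
      have hjP := (mem_filter.mp hj).2
      have hjnB : j ∉ B := fun hjB => hP _ (hBneg j hjB i) hjP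
      exact (hv'nB i j hjnB).symm
    rw [hDg, ← hpropeq i]
    have := hmain i
    linarith [h1]
  · right
    intro c hc hcneg
    rw [hx] at hc
    have hcim : c ∈ (T i).image pF := by
      rcases mem_union.mp hc with h1 | h1
      · exfalso
        have hcM : c ∈ M := hx'sub i (mem_of_mem_filter c h1)
        have := hgood c hcM (mem_filter.mp h1).2 i
        linarith
      · exact h1
    obtain ⟨t₀, hT₀, hpt₀⟩ := mem_image.mp hcim
    have ht₀k : t₀ < k := hTk i t₀ hT₀
    have hT₀ne : (T i).Nonempty := ⟨t₀, hT₀⟩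
    set tm := (T i).min' hT₀ne with htm
    have htmT : tm ∈ T i := Finset.min'_mem _ _
    have htmle : tm ≤ t₀ := Finset.min'_le _ _ hT₀
    have htmk : tm < k := hTk i tm htmT
    have hmono : v' i (lrF t₀) ≤ v' i (lrF tm) := by
      rw [hv'lrF i _ ht₀k, hv'lrF i _ htmk,
        List.getD_eq_getElem _ _ (by rw [hslen]; omega),
        List.getD_eq_getElem _ _ (by rw [hslen]; omega)]
      exact sorted_getElem_le (hssorted i) (by omega) (by rw [hslen]; omega)
    have hcstar_mem : lrF tm ∈ x' i := by
      have := hMx' (lrF tm) (hBM (hlrF_mem tm htmk))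
      rwa [hTo i tm htmT] at this
    have hh2 := h2 (lrF tm) hcstar_mem (hv'neg i _ (hlrF_mem tm htmk))
    have e1 : bval v i ((x i).erase c) = bval v i (x i) - v i c := by
      unfold bval
      exact Finset.sum_erase_eq_sub (by rw [hx]; exact hc)
    have e2 : bval v' i ((x' i).erase (lrF tm)) = bval v' i (x' i) - v' i (lrF tm) := by
      unfold bval
      exact Finset.sum_erase_eq_sub hcstar_mem
    rw [e1, ← hpropeq i]
    rw [e2] at hh2
    have hsum1 : ∑ t ∈ (T i).erase t₀, v i (pF t) =
        (∑ t ∈ T i, v i (pF t)) - v i (pF t₀) := Finset.sum_erase_eq_sub hT₀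
    have hsum2 : ∑ t ∈ (T i).erase tm, v' i (lrF t) =
        (∑ t ∈ T i, v' i (lrF t)) - v' i (lrF tm) := Finset.sum_erase_eq_sub htmT
    have hptw : ∑ t ∈ (T i).erase t₀, v' i (lrF t) ≤ ∑ t ∈ (T i).erase t₀, v i (pF t) :=
      Finset.sum_le_sum fun t ht => hkey i t (Finset.erase_subset _ _ ht)
    have hsum3 : ∑ t ∈ (T i).erase t₀, v' i (lrF t) =
        (∑ t ∈ T i, v' i (lrF t)) - v' i (lrF t₀) := Finset.sum_erase_eq_sub hT₀
    have hvc : v i c = v i (pF t₀) := by rw [← hpt₀]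
    have hCi := hCeq i i
    rw [hxval i]
    rw [hx'val i] at hh2
    linarith

end KeyReduction


/-- If every separable instance with IDO pure bads admits a PropMX
(resp. PropMX₀) allocation, then every separable instance admits a PropMX
(resp. PropMX₀) allocation. -/
theorem ido_reduction_for_separable :
    ((∀ (N I : Type) [Fintype N] [Fintype I] [Nonempty N]
        (v : N → I → ℝ) (M : Finset I),
        (∀ j ∈ M, (∀ i : N, 0 ≤ v i j) ∨ (∀ i : N, v i j < 0)) →
        IDO v (M.filter fun j => ∀ i : N, v i j < 0) →
        ∃ x : N → Finset I, IsAllocation x M ∧ PropMX v M x) →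
      ∀ (N I : Type) [Fintype N] [Fintype I] [Nonempty N]
        (v : N → I → ℝ) (M : Finset I),
        (∀ j ∈ M, (∀ i : N, 0 ≤ v i j) ∨ (∀ i : N, v i j < 0)) →
        ∃ x : N → Finset I, IsAllocation x M ∧ PropMX v M x) ∧
    ((∀ (N I : Type) [Fintype N] [Fintype I] [Nonempty N]
        (v : N → I → ℝ) (M : Finset I),
        (∀ j ∈ M, (∀ i : N, 0 ≤ v i j) ∨ (∀ i : N, v i j < 0)) →
        IDO v (M.filter fun j => ∀ i : N, v i j < 0) →
        ∃ x : N → Finset I, IsAllocation x M ∧ PropMX0 v M x) →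
      ∀ (N I : Type) [Fintype N] [Fintype I] [Nonempty N]
        (v : N → I → ℝ) (M : Finset I),
        (∀ j ∈ M, (∀ i : N, 0 ≤ v i j) ∨ (∀ i : N, v i j < 0)) →
        ∃ x : N → Finset I, IsAllocation x M ∧ PropMX0 v M x) := by
  constructor
  · intro H N I _ _ _ v M hsep
    obtain ⟨x, hx, hp⟩ := key_reduction (fun r => 0 < r)
      (fun r hr hpr => absurd hpr (not_lt.mpr hr.le))
      (fun N I _ _ _ v M hsep hido =>
        (H N I v M hsep hido).imp fun x hx =>
          ⟨hx.1, (propMX_iff_propGen v M x).mp hx.2⟩) N I v M hsep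
    exact ⟨x, hx, (propMX_iff_propGen v M x).mpr hp⟩
  · intro H N I _ _ _ v M hsep
    obtain ⟨x, hx, hp⟩ := key_reduction (fun r => 0 ≤ r)
      (fun r hr hpr => absurd hr (not_lt.mpr hpr))
      (fun N I _ _ _ v M hsep hido =>
        (H N I v M hsep hido).imp fun x hx =>
          ⟨hx.1, (propMX0_iff_propGen v M x).mp hx.2⟩) N I v M hsep
    exact ⟨x, hx, (propMX0_iff_propGen v M x).mpr hp⟩
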